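/- For λ ∈ (0, π), the equation V(λ) = −1/2 holds if and only if cos(λ/2) = (√2 − 1)/2 = a₊. Equivalently, for q = cos(λ/2) ∈ (0,1) the equation V(λ) = −1/2 is equivalent to 4q³ − 5q + 1 = 0, and 4q³ − 5q + 1 = (q − 1)(4q² + 4q − 1), whose roots are 1, a₊ and a₋. -/
import Mathlib


noncomputable section

/-- The potential `V(λ) = 1 - cos λ - 1/√(2 + 2 cos λ)`. -/
def Vpot (l : ℝ) : ℝ := 1 - Real.cos l - 1 / Real.sqrt (2 + 2 * Real.cos l)

def aplus : ℝ := -(1 / 2) + Real.sqrt 2 / 2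
def aminus : ℝ := -(1 / 2) - Real.sqrt 2 / 2

lemma sqrt2_sq : Real.sqrt 2 ^ 2 = 2 := Real.sq_sqrt (by norm_num)

lemma sqrt2_lt : Real.sqrt 2 < 3 := by
  nlinarith [Real.sqrt_nonneg 2, sqrt2_sq]

lemma sqrt2_gt : (1:ℝ) < Real.sqrt 2 := by
  nlinarith [Real.sqrt_nonneg 2, sqrt2_sq]

lemma roots (q : ℝ) : (q - 1) * (4 * q ^ 2 + 4 * q - 1) = 0 ↔ q = 1 ∨ q = aplus ∨ q = aminus := by
  have h4 : (4 : ℝ) * q ^ 2 + 4 * q - 1 = 4 * (q - aplus) * (q - aminus) := by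
    unfold aplus aminus; nlinarith [sqrt2_sq]
  rw [h4]
  constructor
  · intro h
    rcases mul_eq_zero.1 h with h | h
    · left; linarith
    rcases mul_eq_zero.1 h with h | h
    · rcases mul_eq_zero.1 h with h | h
      · norm_num at h
      · right; left; linarith
    · right; right; linarith
  · rintro (h | h | h) <;> subst h <;> ring

lemma key (l : ℝ) (hl : l ∈ Set.Ioo (0 : ℝ) Real.pi) :
    Vpot l = -(1 / 2) ↔ 4 * Real.cos (l / 2) ^ 3 - 5 * Real.cos (l / 2) + 1 = 0 := by
  obtain ⟨h0, hp⟩ := hl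
  set q := Real.cos (l / 2) with hq
  have hq0 : 0 < q := Real.cos_pos_of_mem_Ioo ⟨by linarith [Real.pi_pos], by linarith⟩
  have hq1 : q < 1 := by
    have := Real.cos_lt_cos_of_nonneg_of_le_pi (x := 0) (y := l / 2) le_rfl (by linarith) (by linarith)
    simpa using this
  have hcos : Real.cos l = 2 * q ^ 2 - 1 := by
    have := Real.cos_two_mul (l / 2)
    rw [show 2 * (l / 2) = l by ring] at this
    linarith
  have hsq : Real.sqrt (2 + 2 * Real.cos l) = 2 * q := by
    rw [hcos, show 2 + 2 * (2 * q ^ 2 - 1) = (2 * q) ^ 2 by ring]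
    exact Real.sqrt_sq (by linarith)
  unfold Vpot
  rw [hsq, hcos]
  constructor
  · intro h
    field_simp at h
    nlinarith [h]
  · intro h
    field_simp
    nlinarith [h]

theorem stmt4 :
    (∀ l ∈ Set.Ioo (0 : ℝ) Real.pi, (Vpot l = -(1 / 2) ↔ Real.cos (l / 2) = aplus)) ∧
    (Real.sqrt 2 - 1) / 2 = aplus ∧
    (∀ l ∈ Set.Ioo (0 : ℝ) Real.pi,
      (Vpot l = -(1 / 2) ↔ 4 * Real.cos (l / 2) ^ 3 - 5 * Real.cos (l / 2) + 1 = 0)) ∧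
    (∀ q : ℝ, 4 * q ^ 3 - 5 * q + 1 = (q - 1) * (4 * q ^ 2 + 4 * q - 1)) ∧
    (∀ q : ℝ, (q - 1) * (4 * q ^ 2 + 4 * q - 1) = 0 ↔ q = 1 ∨ q = aplus ∨ q = aminus) := by
  refine ⟨?_, by unfold aplus; ring, key, fun q => by ring, roots⟩
  intro l hl
  obtain ⟨h0, hp⟩ := hl
  set q := Real.cos (l / 2) with hq
  have hq0 : 0 < q := Real.cos_pos_of_mem_Ioo ⟨by linarith [Real.pi_pos], by linarith⟩
  have hq1 : q < 1 := by
    have := Real.cos_lt_cos_of_nonneg_of_le_pi (x := 0) (y := l / 2) le_rfl (by linarith) (by linarith)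
    simpa using this
  rw [key l ⟨h0, hp⟩]
  constructor
  · intro h
    have h' : (q - 1) * (4 * q ^ 2 + 4 * q - 1) = 0 := by linarith [h]; 
    rcases (roots q).1 (by nlinarith [h]) with h1 | h1 | h1
    · linarith
    · exact h1
    · exfalso; unfold aminus at h1; nlinarith [sqrt2_gt]
  · intro h
    rw [← hq, h]; unfold aplus; linear_combination ((Real.sqrt 2 - 3) / 2) * sqrt2_sq
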